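/- Let h : ℝ → ℝ be bounded and continuous, and let g : ℝ → ℝ be a bounded, twice continuously differentiable function with g(x) − g''(x) = h(x) for all x ∈ ℝ. Then g(x) = (p*h)(x) for all x ∈ ℝ; i.e., p*h is the unique bounded classical solution of (1 − ∂ₓ²)g = h. -/

import Mathlib

open MeasureTheory Real Set

/-- The convolution `(p*f)(x) = ∫_ℝ (1/2) e^{-|x-y|} f(y) dy` with `p(x) = (1/2)exp(-|x|)`. -/
noncomputable def pConv (f : ℝ → ℝ) (x : ℝ) : ℝ := ∫ y : ℝ, (1/2) * Real.exp (-|x - y|) * f y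

/-- `(p₊*f)(x) = (1/2)∫_{-∞}^{x} e^{y-x} f(y) dy`. -/
noncomputable def pPlus (f : ℝ → ℝ) (x : ℝ) : ℝ := (1/2) * ∫ y in Set.Iic x, Real.exp (y - x) * f y

/-- `(p₋*f)(x) = (1/2)∫_{x}^{∞} e^{x-y} f(y) dy`. -/
noncomputable def pMinus (f : ℝ → ℝ) (x : ℝ) : ℝ := (1/2) * ∫ y in Set.Ici x, Real.exp (x - y) * f y


theorem stmt2 (h g : ℝ → ℝ) (hh : Continuous h) (hhb : ∃ C, ∀ x, |h x| ≤ C)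
    (hgb : ∃ C, ∀ x, |g x| ≤ C) (hg : ContDiff ℝ 2 g)
    (heq : ∀ x : ℝ, g x - deriv (deriv g) x = h x) :
    ∀ x : ℝ, g x = pConv h x := by
  obtain ⟨C, hC⟩ := hhb
  obtain ⟨Cg, hCg⟩ := hgb
  have hC0 : (0:ℝ) ≤ C := (abs_nonneg _).trans (hC 0)
  have hg1 : Differentiable ℝ g := hg.differentiable (by norm_num)
  have hg2 : Differentiable ℝ (deriv g) := by
    have h2 : ContDiff ℝ (1+1 : ℕ) g := by norm_num; exact_mod_cast hg
    exact (((contDiff_succ_iff_deriv (n := 1)).mp (by simpa [one_add_one_eq_two] using hg)).2.2).differentiable (by norm_num)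
  set A : ℝ → ℝ := fun x => ∫ y in Iic x, exp (y - x) * h y with hA
  set B : ℝ → ℝ := fun x => ∫ y in Ioi x, exp (x - y) * h y with hB
  -- integrability of kernels
  have intA : ∀ x : ℝ, IntegrableOn (fun y => exp (y - x) * h y) (Iic x) := by
    intro x
    have hdom : IntegrableOn (fun y => C * exp (y - x)) (Iic x) := by
      have h1 : IntegrableOn (fun y => exp (y - x)) (Iic x) := by
        simpa [IntegrableOn, Real.exp_sub] using (integrableOn_exp_Iic x).div_const (exp x)
      exact h1.const_mul C
    refine hdom.mono' ?_ ?_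
    · exact (Continuous.mul (by continuity) hh).aestronglyMeasurable.restrict
    · filter_upwards with y
      rw [Real.norm_eq_abs, abs_mul, abs_of_pos (exp_pos _)]
      calc exp (y - x) * |h y| ≤ exp (y - x) * C :=
            mul_le_mul_of_nonneg_left (hC y) (exp_pos _).le
        _ = C * exp (y - x) := mul_comm _ _
  have expB : ∀ x : ℝ, IntegrableOn (fun y => exp (x - y)) (Ioi x) := by
    intro x
    have h0 : IntegrableOn (fun y => exp (-1 * y)) (Ioi x) := exp_neg_integrableOn_Ioi x one_pos
    refine IntegrableOn.congr_fun (h0.const_mul (exp x)) (fun y _ => ?_) measurableSet_Ioi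
    rw [← Real.exp_add]; congr 1; ring
  have intB : ∀ x : ℝ, IntegrableOn (fun y => exp (x - y) * h y) (Ioi x) := by
    intro x
    refine ((expB x).const_mul C).mono' ?_ ?_
    · exact (Continuous.mul (by continuity) hh).aestronglyMeasurable.restrict
    · filter_upwards with y
      rw [Real.norm_eq_abs, abs_mul, abs_of_pos (exp_pos _)]
      calc exp (x - y) * |h y| ≤ exp (x - y) * C :=
            mul_le_mul_of_nonneg_left (hC y) (exp_pos _).le
        _ = C * exp (x - y) := mul_comm _ _
  -- values of kernel integrals
  have kerA : ∀ x : ℝ, ∫ y in Iic x, exp (y - x) = 1 := by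
    intro x
    simp_rw [Real.exp_sub]
    rw [integral_div, integral_exp_Iic, div_self (exp_ne_zero x)]
  have kerB : ∀ x : ℝ, ∫ y in Ioi x, exp (x - y) = 1 := by
    intro x
    simp_rw [Real.exp_sub, div_eq_mul_inv, ← Real.exp_neg]
    rw [integral_const_mul, integral_exp_neg_Ioi, ← Real.exp_add]
    simp
  -- FTC on the left half-line
  have hasderA : ∀ x y : ℝ,
      HasDerivAt (fun y => exp (y - x) * (g y - deriv g y)) (exp (y - x) * h y) y := by
    intro x y
    have h1 : HasDerivAt (fun y : ℝ => exp (y - x)) (exp (y - x)) y := by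
      simpa using ((hasDerivAt_id y).sub_const x).exp
    have h2 : HasDerivAt (fun y => g y - deriv g y)
        (deriv g y - deriv (deriv g) y) y := ((hg1 y).hasDerivAt).sub ((hg2 y).hasDerivAt)
    have h3 := h1.mul h2
    refine h3.congr_deriv ?_
    rw [← heq y]; ring
  have FTCa : ∀ x a : ℝ, ∫ y in a..x, exp (y - x) * h y =
      exp (x - x) * (g x - deriv g x) - exp (a - x) * (g a - deriv g a) := by
    intro x a
    exact intervalIntegral.integral_eq_sub_of_hasDerivAt (fun y _ => hasderA x y)
      ((Continuous.mul (by continuity) hh).intervalIntegrable a x)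
  have tphi : ∀ x : ℝ, Filter.Tendsto (fun a => exp a * (g a - deriv g a)) Filter.atBot
      (nhds (exp x * (g x - deriv g x - A x))) := by
    intro x
    have t1 : Filter.Tendsto (fun a => ∫ y in a..x, exp (y - x) * h y) Filter.atBot (nhds (A x)) :=
      intervalIntegral_tendsto_integral_Iic x (intA x) Filter.tendsto_id
    have t2 : Filter.Tendsto (fun a => exp (a - x) * (g a - deriv g a)) Filter.atBot
        (nhds (g x - deriv g x - A x)) := by
      have t0 : Filter.Tendsto
          (fun a => exp (x - x) * (g x - deriv g x) - ∫ y in a..x, exp (y - x) * h y)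
          Filter.atBot (nhds (exp (x - x) * (g x - deriv g x) - A x)) :=
        tendsto_const_nhds.sub t1
      simp only [sub_self, Real.exp_zero, one_mul] at t0
      refine t0.congr fun a => ?_
      rw [FTCa x a, sub_self, Real.exp_zero]; ring
    have t3 := Filter.Tendsto.const_mul (exp x) t2
    refine t3.congr fun a => ?_
    have hxa : x + (a - x) = a := by ring
    rw [← mul_assoc, ← Real.exp_add, hxa]
  set c : ℝ := g 0 - deriv g 0 - A 0 with hc
  have hAx : ∀ x : ℝ, A x = g x - deriv g x - c * exp (-x) := by
    intro x
    have huniq := tendsto_nhds_unique (tphi x) (tphi 0)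
    simp only [Real.exp_zero, one_mul] at huniq
    rw [← hc] at huniq
    have e1 : exp x * exp (-x) = 1 := by rw [← Real.exp_add]; simp
    have e2 : c * exp (-x) = g x - deriv g x - A x := by
      calc c * exp (-x) = exp x * (g x - deriv g x - A x) * exp (-x) := by rw [huniq]
        _ = (g x - deriv g x - A x) * (exp x * exp (-x)) := by ring
        _ = g x - deriv g x - A x := by rw [e1, mul_one]
    linarith
  -- FTC on the right half-line
  have hasderB : ∀ x y : ℝ,
      HasDerivAt (fun y => exp (x - y) * (g y + deriv g y)) (-(exp (x - y) * h y)) y := by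
    intro x y
    have h1 : HasDerivAt (fun y : ℝ => exp (x - y)) (-exp (x - y)) y := by
      simpa using ((hasDerivAt_id y).const_sub x).exp
    have h2 : HasDerivAt (fun y => g y + deriv g y)
        (deriv g y + deriv (deriv g) y) y := ((hg1 y).hasDerivAt).add ((hg2 y).hasDerivAt)
    have h3 := h1.mul h2
    refine h3.congr_deriv ?_
    rw [← heq y]; ring
  have FTCb : ∀ x b : ℝ, ∫ y in x..b, exp (x - y) * h y =
      exp (x - x) * (g x + deriv g x) - exp (x - b) * (g b + deriv g b) := by
    intro x b
    have h3 := intervalIntegral.integral_eq_sub_of_hasDerivAt (fun y _ => hasderB x y)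
      ((Continuous.neg (Continuous.mul (by continuity) hh)).intervalIntegrable x b)
    rw [intervalIntegral.integral_neg] at h3
    linarith
  have tpsi : ∀ x : ℝ, Filter.Tendsto (fun b => exp (-b) * (g b + deriv g b)) Filter.atTop
      (nhds (exp (-x) * (g x + deriv g x - B x))) := by
    intro x
    have t1 : Filter.Tendsto (fun b => ∫ y in x..b, exp (x - y) * h y) Filter.atTop (nhds (B x)) :=
      intervalIntegral_tendsto_integral_Ioi x (intB x) Filter.tendsto_id
    have t2 : Filter.Tendsto (fun b => exp (x - b) * (g b + deriv g b)) Filter.atTop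
        (nhds (g x + deriv g x - B x)) := by
      have t0 : Filter.Tendsto
          (fun b => exp (x - x) * (g x + deriv g x) - ∫ y in x..b, exp (x - y) * h y)
          Filter.atTop (nhds (exp (x - x) * (g x + deriv g x) - B x)) :=
        tendsto_const_nhds.sub t1
      simp only [sub_self, Real.exp_zero, one_mul] at t0
      refine t0.congr fun b => ?_
      rw [FTCb x b, sub_self, Real.exp_zero]; ring
    have t3 := Filter.Tendsto.const_mul (exp (-x)) t2
    refine t3.congr fun b => ?_
    have hxb : -x + (x - b) = -b := by ring
    rw [← mul_assoc, ← Real.exp_add, hxb]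
  set d : ℝ := g 0 + deriv g 0 - B 0 with hd
  have hBx : ∀ x : ℝ, B x = g x + deriv g x - d * exp x := by
    intro x
    have huniq := tendsto_nhds_unique (tpsi x) (tpsi 0)
    simp only [neg_zero, Real.exp_zero, one_mul] at huniq
    rw [← hd] at huniq
    have e1 : exp (-x) * exp x = 1 := by rw [← Real.exp_add]; simp
    have e2 : d * exp x = g x + deriv g x - B x := by
      calc d * exp x = exp (-x) * (g x + deriv g x - B x) * exp x := by rw [huniq]
        _ = (g x + deriv g x - B x) * (exp (-x) * exp x) := by ring
        _ = g x + deriv g x - B x := by rw [e1, mul_one]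
    linarith
  -- split pConv into the two half-line integrals
  have hsplit : ∀ x : ℝ, pConv h x = (1/2) * A x + (1/2) * B x := by
    intro x
    have hIic : IntegrableOn (fun y => (1/2) * exp (-|x - y|) * h y) (Iic x) := by
      refine IntegrableOn.congr_fun ((intA x).const_mul (1/2)) (fun y hy => ?_) measurableSet_Iic
      rw [abs_of_nonneg (sub_nonneg.2 hy), neg_sub]; ring
    have hIoi : IntegrableOn (fun y => (1/2) * exp (-|x - y|) * h y) (Ioi x) := by
      refine IntegrableOn.congr_fun ((intB x).const_mul (1/2)) (fun y hy => ?_) measurableSet_Ioi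
      rw [abs_of_nonpos (by linarith [mem_Ioi.mp hy] : x - y ≤ 0), neg_neg]; ring
    have hs := (intervalIntegral.integral_Iic_add_Ioi (b := x) hIic hIoi).symm
    rw [pConv, hs]
    congr 1
    · rw [hA]; simp only
      rw [← integral_const_mul]
      refine setIntegral_congr_fun measurableSet_Iic fun y hy => ?_
      rw [abs_of_nonneg (sub_nonneg.2 hy), neg_sub]; ring
    · rw [hB]; simp only
      rw [← integral_const_mul]
      refine setIntegral_congr_fun measurableSet_Ioi fun y hy => ?_
      rw [abs_of_nonpos (by linarith [mem_Ioi.mp hy] : x - y ≤ 0), neg_neg]; ring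
  -- bounds
  have hAb : ∀ x : ℝ, |A x| ≤ C := by
    intro x
    calc |A x| ≤ ∫ y in Iic x, exp (y - x) * |h y| := by
          simpa using
            norm_integral_le_integral_norm (μ := volume.restrict (Iic x))
              (fun y => exp (y - x) * h y)
      _ ≤ ∫ y in Iic x, C * exp (y - x) := by
          refine setIntegral_mono_on
            (IntegrableOn.congr_fun (intA x).abs
              (fun y _ => by rw [abs_mul, abs_of_pos (exp_pos _)]) measurableSet_Iic)
            (by simpa [IntegrableOn, Real.exp_sub] using
              ((integrableOn_exp_Iic x).div_const (exp x)).const_mul C)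
            measurableSet_Iic fun y _ => ?_
          calc exp (y - x) * |h y| ≤ exp (y - x) * C :=
                mul_le_mul_of_nonneg_left (hC y) (exp_pos _).le
            _ = C * exp (y - x) := mul_comm _ _
      _ = C := by rw [integral_const_mul, kerA x, mul_one]
  have hBb : ∀ x : ℝ, |B x| ≤ C := by
    intro x
    calc |B x| ≤ ∫ y in Ioi x, exp (x - y) * |h y| := by
          simpa using
            norm_integral_le_integral_norm (μ := volume.restrict (Ioi x))
              (fun y => exp (x - y) * h y)
      _ ≤ ∫ y in Ioi x, C * exp (x - y) := by
          refine setIntegral_mono_on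
            (IntegrableOn.congr_fun (intB x).abs
              (fun y _ => by rw [abs_mul, abs_of_pos (exp_pos _)]) measurableSet_Ioi)
            ((expB x).const_mul C)
            measurableSet_Ioi fun y _ => ?_
          calc exp (x - y) * |h y| ≤ exp (x - y) * C :=
                mul_le_mul_of_nonneg_left (hC y) (exp_pos _).le
            _ = C * exp (x - y) := mul_comm _ _
      _ = C := by rw [integral_const_mul, kerB x, mul_one]
  -- key formula
  have keyf : ∀ x : ℝ, pConv h x = g x - (c * exp (-x) + d * exp x) / 2 := by
    intro x
    rw [hsplit x, hAx x, hBx x]; ring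
  set K : ℝ := 2 * (Cg + C) with hK
  have hbound : ∀ x : ℝ, |c * exp (-x) + d * exp x| ≤ K := by
    intro x
    have h1 : c * exp (-x) + d * exp x = 2 * (g x - pConv h x) := by rw [keyf x]; ring
    rw [h1, abs_mul, abs_two]
    have hpb : |pConv h x| ≤ C := by
      rw [hsplit x]
      calc |(1/2) * A x + (1/2) * B x| ≤ |(1/2) * A x| + |(1/2) * B x| := abs_add_le _ _
        _ = (1/2) * |A x| + (1/2) * |B x| := by
            rw [abs_mul, abs_mul, abs_of_pos (show (0:ℝ) < 1/2 by norm_num)]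
        _ ≤ (1/2) * C + (1/2) * C := by gcongr; exacts [hAb x, hBb x]
        _ = C := by ring
    have h2 : |g x - pConv h x| ≤ Cg + C := by
      calc |g x - pConv h x| = |g x + -(pConv h x)| := by rw [sub_eq_add_neg]
        _ ≤ |g x| + |-(pConv h x)| := abs_add_le _ _
        _ = |g x| + |pConv h x| := by rw [abs_neg]
        _ ≤ Cg + C := add_le_add (hCg x) hpb
    rw [hK]; linarith
  have tend0 : ∀ M : ℝ, Filter.Tendsto (fun n : ℕ => M * exp (-(n:ℝ))) Filter.atTop (nhds 0) := by
    intro M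
    have hb : Filter.Tendsto (fun n : ℕ => exp (-(n:ℝ))) Filter.atTop (nhds 0) :=
      Real.tendsto_exp_atBot.comp (Filter.tendsto_neg_atTop_atBot.comp tendsto_natCast_atTop_atTop)
    simpa using hb.const_mul M
  have hd0 : d = 0 := by
    have hstep : ∀ n : ℕ, |d| ≤ (K + |c|) * exp (-(n:ℝ)) := by
      intro n
      have h1 := hbound (n : ℝ)
      have h3 : |c * exp (-(n:ℝ))| ≤ |c| := by
        rw [abs_mul, abs_of_pos (exp_pos _)]
        calc |c| * exp (-(n:ℝ)) ≤ |c| * 1 :=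
              mul_le_mul_of_nonneg_left
                (Real.exp_le_one_iff.mpr (neg_nonpos.mpr (Nat.cast_nonneg n))) (abs_nonneg c)
          _ = |c| := mul_one _
      have h2 : |d| * exp (n:ℝ) ≤ K + |c| := by
        have : |d * exp (n:ℝ)| ≤ K + |c * exp (-(n:ℝ))| := by
          calc |d * exp (n:ℝ)|
              = |c * exp (-(n:ℝ)) + d * exp (n:ℝ) + -(c * exp (-(n:ℝ)))| := by congr 1; ring
            _ ≤ |c * exp (-(n:ℝ)) + d * exp (n:ℝ)| + |-(c * exp (-(n:ℝ)))| := abs_add_le _ _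
            _ = |c * exp (-(n:ℝ)) + d * exp (n:ℝ)| + |c * exp (-(n:ℝ))| := by rw [abs_neg]
            _ ≤ K + |c * exp (-(n:ℝ))| := by linarith
        rw [abs_mul, abs_of_pos (exp_pos _)] at this
        linarith
      rw [Real.exp_neg, mul_comm, ← div_eq_inv_mul, le_div_iff₀ (exp_pos _)]
      linarith
    have hle : |d| ≤ 0 := ge_of_tendsto' (tend0 (K + |c|)) hstep
    exact abs_eq_zero.mp (le_antisymm hle (abs_nonneg d))
  have hc0 : c = 0 := by
    have hstep : ∀ n : ℕ, |c| ≤ K * exp (-(n:ℝ)) := by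
      intro n
      have h1 := hbound (-(n : ℝ))
      rw [neg_neg, hd0] at h1
      simp only [zero_mul, add_zero] at h1
      rw [abs_mul, abs_of_pos (exp_pos _)] at h1
      rw [Real.exp_neg, mul_comm, ← div_eq_inv_mul, le_div_iff₀ (exp_pos _)]
      linarith
    have hle : |c| ≤ 0 := ge_of_tendsto' (tend0 K) hstep
    exact abs_eq_zero.mp (le_antisymm hle (abs_nonneg c))
  intro x
  rw [keyf x, hc0, hd0]
  ring
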